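/- arXiv:2203.00521 — 3 statements merged into one kernel-verified Lean document; each statement's English description precedes it below -/
import Mathlib

section
/- Let D be a DAG on a finite vertex set V with unconditional dependence graph U^D. Then the set ma_D(V) of source nodes of D is a maximum independent set of U^D: no two source nodes are adjacent in U^D, and every independent set of U^D has cardinality at most |ma_D(V)|. -/
namespace UEC

variable {V : Type*}

/-- A directed graph is a DAG if it has no directed cycles. -/
def IsDAG (D : Digraph V) : Prop := ∀ v : V, ¬ Relation.TransGen D.Adj v v

/-- `an D v` : the set of ancestors of `v` (nodes with a directed path to `v`),
including `v` itself. -/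
def an (D : Digraph V) (v : V) : Set V := {u | Relation.ReflTransGen D.Adj u v}

/-- `de D v` : the set of descendants of `v` (nodes reachable by a directed path
from `v`), including `v` itself. -/
def de (D : Digraph V) (v : V) : Set V := {u | Relation.ReflTransGen D.Adj v u}

/-- `pa D v` : the set of parents of `v`. -/
def pa (D : Digraph V) (v : V) : Set V := {u | D.Adj u v}

/-- A source node is a node with no parents. -/
def IsSource (D : Digraph V) (v : V) : Prop := pa D v = ∅

/-- `sources D` : the set of source nodes of `D` (denoted `ma_D(V)` in the paper). -/
def sources (D : Digraph V) : Set V := {v | IsSource D v}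

/-- Ancestors of a set of nodes. -/
def anSet (D : Digraph V) (A : Set V) : Set V := ⋃ a ∈ A, an D a

/-- `maSet D A = {u ∈ an_D(A) : an_D(u) = {u}}`, the source nodes that are
ancestors of `A`. -/
def maSet (D : Digraph V) (A : Set V) : Set V :=
  {u | u ∈ anSet D A ∧ an D u = {u}}

/-- Two nodes are adjacent in a digraph if there is an edge between them in
either direction. -/
def Adjacent (D : Digraph V) (v w : V) : Prop := D.Adj v w ∨ D.Adj w v

/-- A trek in `D` is a path over distinct vertices (given as the list of its
vertices, consecutive ones being adjacent) containing no collider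
`p i → p (i+1) ← p (i+2)` as a subpath. -/
def IsTrekList (D : Digraph V) (p : List V) : Prop :=
  p.Nodup ∧
    (∀ i : ℕ, (h : i + 1 < p.length) →
      (D.Adj (p.get ⟨i, by omega⟩) (p.get ⟨i + 1, h⟩) ∨
        D.Adj (p.get ⟨i + 1, h⟩) (p.get ⟨i, by omega⟩))) ∧
    (∀ i : ℕ, (h : i + 2 < p.length) →
      ¬(D.Adj (p.get ⟨i, by omega⟩) (p.get ⟨i + 1, by omega⟩) ∧
        D.Adj (p.get ⟨i + 2, h⟩) (p.get ⟨i + 1, by omega⟩)))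

/-- There is a trek between `v` and `w` in `D`. -/
def HasTrek (D : Digraph V) (v w : V) : Prop :=
  ∃ p : List V, IsTrekList D p ∧ p.head? = some v ∧ p.getLast? = some w

/-- Adjacency in the unconditional dependence graph `U^D` : two distinct nodes
are adjacent iff there is a trek between them. -/
def UAdj (D : Digraph V) (v w : V) : Prop :=
  v ≠ w ∧ (HasTrek D v w ∨ HasTrek D w v)

/-- Two digraphs on the same vertex set are unconditionally equivalent if for
all distinct nodes there is a trek between them in one iff there is one in the
other. -/
def UncondEquiv (D D' : Digraph V) : Prop :=
  ∀ v w : V, v ≠ w → (HasTrek D v w ↔ HasTrek D' v w)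

/-- The digraph obtained by adding the edge `v → w`. -/
def addEdge (D : Digraph V) (v w : V) : Digraph V :=
  ⟨fun a b => D.Adj a b ∨ (a = v ∧ b = w)⟩

/-- The digraph obtained by deleting the edge `v → w`. -/
def delEdge (D : Digraph V) (v w : V) : Digraph V :=
  ⟨fun a b => D.Adj a b ∧ ¬(a = v ∧ b = w)⟩

/-- The digraph obtained by replacing the edge `v → w` with `w → v`. -/
def revEdge (D : Digraph V) (v w : V) : Digraph V :=
  ⟨fun a b => (D.Adj a b ∧ ¬(a = v ∧ b = w)) ∨ (a = w ∧ b = v)⟩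

/-- The ordered pair `(v, w)` is partially weakly covered in `D`. -/
def PartiallyWeaklyCovered (D : Digraph V) (v w : V) : Prop :=
  maSet D {v} ⊆ maSet D {w} ∧ v ∉ an D w ∧ w ∉ an D v ∧ pa D v ≠ ∅

/-- The ordered pair `(v, w)` is implied by transitivity in `D`, i.e.
`v ∈ an_D(w) \ ({w} ∪ pa_D(w))`. -/
def ImpliedByTransitivity (D : Digraph V) (v w : V) : Prop :=
  v ∈ an D w \ ({w} ∪ pa D w)

/-- The edge `v → w` is weakly covered in `D`. -/
def WeaklyCovered (D : Digraph V) (v w : V) : Prop :=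
  maSet D (pa D v) = maSet D (pa D w \ {v}) ∧ v ∉ anSet D (pa D w \ {v})


section Aux

variable {D : Digraph V}

lemma two_cycle_false (hD : IsDAG D) {a b : V} (h1 : D.Adj a b) (h2 : D.Adj b a) : False :=
  hD a (Relation.TransGen.head h1 (Relation.TransGen.single h2))

lemma mem_chain_reachable {r : V → V → Prop} :
    ∀ {l : List V} {a x : V}, List.Chain r a l → x ∈ a :: l → Relation.ReflTransGen r a x := by
  intro l
  induction l with
  | nil => intro a x _ hx; simp at hx; subst hx; exact .refl
  | cons b l ih =>
    intro a x hc hx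
    rcases List.mem_cons.mp hx with h | h
    · subst h; exact .refl
    · simp only [List.Chain, List.isChain_cons_cons] at hc
      exact (Relation.ReflTransGen.single hc.1).trans (ih hc.2 h)

lemma chain_nodup (hD : IsDAG D) :
    ∀ {l : List V} {a : V}, List.Chain D.Adj a l → (a :: l).Nodup := by
  intro l
  induction l with
  | nil => intro a _; simp
  | cons b l ih =>
    intro a hc
    simp only [List.Chain, List.isChain_cons_cons] at hc
    refine List.nodup_cons.mpr ⟨?_, ih hc.2⟩
    intro ha
    exact hD a (Relation.TransGen.head' hc.1 (mem_chain_reachable hc.2 ha))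

lemma isTrekList_of_chain (hD : IsDAG D) {a : V} {l : List V} (hc : List.Chain D.Adj a l) :
    IsTrekList D (a :: l) := by
  have hfwd : ∀ i : ℕ, (h : i + 1 < (a :: l).length) →
      D.Adj ((a :: l).get ⟨i, by omega⟩) ((a :: l).get ⟨i + 1, h⟩) := by
    have hc' : List.IsChain D.Adj (a :: l) := hc
    intro i h
    have := List.isChain_iff_getElem.mp hc' i h
    simpa using this
  refine ⟨chain_nodup hD hc, fun i h => Or.inl (hfwd i h), ?_⟩
  intro i h hcol
  exact two_cycle_false hD (hfwd (i + 1) (by omega)) hcol.2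

lemma trek_cons_rev (hD : IsDAG D) {L : List V} {a b : V} (hT : IsTrekList D L)
    (hb : L.head? = some b) (hadj : D.Adj b a) (ha : a ∉ L) : IsTrekList D (a :: L) := by
  cases L with
  | nil => simp at hb
  | cons c L' =>
  simp only [List.head?_cons, Option.some.injEq] at hb
  subst hb
  obtain ⟨hnd, hedge, hcol⟩ := hT
  refine ⟨List.nodup_cons.mpr ⟨ha, hnd⟩, ?_, ?_⟩
  · intro i h
    match i with
    | 0 => exact Or.inr hadj
    | j + 1 => exact hedge j (by simp at h ⊢; omega)
  · intro i h hc
    match i with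
    | 0 => exact two_cycle_false hD hadj hc.1
    | j + 1 => exact hcol j (by simp at h ⊢; omega) hc

lemma trek_rev_append (hD : IsDAG D) :
    ∀ (l : List V) (b : V) (L : List V), IsTrekList D L → L.head? = some b →
      List.Chain D.Adj b l → (∀ x ∈ l, x ∉ L) → l.Nodup →
      IsTrekList D (l.reverse ++ L) := by
  intro l
  induction l with
  | nil => intro b L hT _ _ _ _; simpa using hT
  | cons x l' ih =>
    intro b L hT hb hc hdisj hnd
    simp only [List.Chain, List.isChain_cons_cons] at hc
    rw [List.nodup_cons] at hnd
    have hT' : IsTrekList D (x :: L) :=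
      trek_cons_rev hD hT hb hc.1 (hdisj x (by simp))
    have : IsTrekList D (l'.reverse ++ (x :: L)) := by
      refine ih x (x :: L) hT' rfl hc.2 ?_ hnd.2
      intro y hy
      simp only [List.mem_cons, not_or]
      exact ⟨fun h => hnd.1 (h ▸ hy), hdisj y (by simp [hy])⟩
    simpa [List.append_assoc] using this

lemma chain_suffix {r : V → V → Prop} :
    ∀ {l : List V} {a x : V}, List.Chain r a l → x ∈ l →
      ∃ l', List.Chain r x l' ∧ l'.length < l.length ∧
        (x :: l').getLast (List.cons_ne_nil _ _) = (a :: l).getLast (List.cons_ne_nil _ _) ∧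
        ∀ y ∈ l', y ∈ l := by
  intro l
  induction l with
  | nil => intro a x _ hx; simp at hx
  | cons y l2 ih =>
    intro a x hc hx
    simp only [List.Chain, List.isChain_cons_cons] at hc
    rcases List.mem_cons.mp hx with h | h
    · subst h
      exact ⟨l2, hc.2, by simp, (List.getLast_cons (List.cons_ne_nil _ _)).symm,
        fun z hz => by simp [hz]⟩
    · obtain ⟨l', h1, h2, h3, h4⟩ := ih hc.2 h
      refine ⟨l', h1, by simp; omega, ?_, fun z hz => by simp [h4 z hz]⟩
      rw [h3]
      exact (List.getLast_cons (List.cons_ne_nil _ _)).symm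

lemma hasTrek_of_chains (hD : IsDAG D) :
    ∀ n : ℕ, ∀ (t v w : V) (lv lw : List V), v ≠ w →
      List.Chain D.Adj t lv → List.Chain D.Adj t lw →
      (t :: lv).getLast (List.cons_ne_nil _ _) = v →
      (t :: lw).getLast (List.cons_ne_nil _ _) = w →
      lv.length + lw.length ≤ n → HasTrek D v w := by
  intro n
  induction n using Nat.strong_induction_on with
  | _ n IH =>
  intro t v w lv lw hvw hcv hcw hlv hlw hlen
  by_cases hshared : ∃ x, x ∈ lv ∧ x ∈ lw
  · obtain ⟨x, hx1, hx2⟩ := hshared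
    obtain ⟨lv', hv1, hv2, hv3, _⟩ := chain_suffix hcv hx1
    obtain ⟨lw', hw1, hw2, hw3, _⟩ := chain_suffix hcw hx2
    exact IH (lv'.length + lw'.length) (by omega) x v w lv' lw' hvw hv1 hw1
      (hv3.trans hlv) (hw3.trans hlw) le_rfl
  · push_neg at hshared
    have hndv := chain_nodup hD hcv
    have hndw := chain_nodup hD hcw
    rw [List.nodup_cons] at hndv hndw
    have hT : IsTrekList D (lv.reverse ++ (t :: lw)) := by
      refine trek_rev_append hD lv t (t :: lw) (isTrekList_of_chain hD hcw) rfl hcv ?_ hndv.2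
      intro x hx
      simp only [List.mem_cons, not_or]
      exact ⟨fun h => hndv.1 (h ▸ hx), hshared x hx⟩
    refine ⟨lv.reverse ++ (t :: lw), hT, ?_, ?_⟩
    · cases lv with
      | nil => simp at hlv ⊢; exact hlv
      | cons c lv0 =>
        rw [List.head?_append_of_ne_nil _ (by simp)]
        rw [List.head?_reverse, List.getLast?_eq_getLast (List.cons_ne_nil _ _)]
        rw [List.getLast_cons (List.cons_ne_nil _ _)] at hlv
        exact congrArg some hlv
    · rw [List.getLast?_append_cons, List.getLast?_eq_getLast (List.cons_ne_nil _ _), hlw]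

lemma hasTrek_of_common_anc (hD : IsDAG D) {t v w : V} (hvw : v ≠ w)
    (hv : Relation.ReflTransGen D.Adj t v) (hw : Relation.ReflTransGen D.Adj t w) :
    HasTrek D v w := by
  obtain ⟨lv, hcv, hlv⟩ := List.exists_isChain_cons_of_relationReflTransGen hv
  obtain ⟨lw, hcw, hlw⟩ := List.exists_isChain_cons_of_relationReflTransGen hw
  exact hasTrek_of_chains hD (lv.length + lw.length) t v w lv lw hvw hcv hcw hlv hlw le_rfl

lemma not_adj_of_source {m : V} (hm : IsSource D m) (u : V) : ¬ D.Adj u m := by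
  intro h
  have : u ∈ pa D m := h
  rw [hm] at this
  exact this

lemma no_trek_sources {m m' : V} (hm : IsSource D m) (hm' : IsSource D m')
    (hne : m ≠ m') : ¬ HasTrek D m m' := by
  rintro ⟨p, ⟨hnd, hedge, hcol⟩, hhead, hlast⟩
  cases p with
  | nil => simp at hhead
  | cons c p' =>
  simp only [List.head?_cons, Option.some.injEq] at hhead
  subst hhead
  rw [List.getLast?_eq_getLast (List.cons_ne_nil _ _), Option.some.injEq] at hlast
  have h2 : 2 ≤ (c :: p').length := by
    by_contra h
    push_neg at h
    have hp' : p' = [] := by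
      cases p' with
      | nil => rfl
      | cons _ _ => simp at h
    subst hp'
    simp [List.getLast] at hlast
    exact hne hlast
  have hfwd : ∀ i : ℕ, (h : i + 1 < (c :: p').length) →
      D.Adj ((c :: p').get ⟨i, by omega⟩) ((c :: p').get ⟨i + 1, h⟩) := by
    intro i
    induction i with
    | zero =>
      intro h
      rcases hedge 0 h with h' | h'
      · exact h'
      · exact absurd h' (not_adj_of_source hm _)
    | succ j ihj =>
      intro h
      rcases hedge (j + 1) h with h' | h'
      · exact h'
      · exact absurd (And.intro (ihj (by omega)) h') (hcol j h)
  have hlt : (c :: p').length - 2 + 1 < (c :: p').length := by omega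
  have hstep := hfwd ((c :: p').length - 2) hlt
  have hgl : (c :: p').get ⟨(c :: p').length - 2 + 1, hlt⟩ = m' := by
    rw [← hlast, List.getLast_eq_getElem, List.get_eq_getElem]
    congr 1
    simp only [List.length_cons] at h2 ⊢
    omega
  rw [hgl] at hstep
  exact not_adj_of_source hm' _ hstep

lemma exists_source_anc [Fintype V] (hD : IsDAG D) (v : V) :
    ∃ s, IsSource D s ∧ Relation.ReflTransGen D.Adj s v := by
  have hirr : IsIrrefl V (Relation.TransGen D.Adj) := ⟨hD⟩
  have hwf : WellFounded (Relation.TransGen D.Adj) :=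
    Finite.wellFounded_of_trans_of_irrefl _
  induction v using hwf.induction with
  | _ x ih =>
    by_cases hx : pa D x = ∅
    · exact ⟨x, hx, Relation.ReflTransGen.refl⟩
    · obtain ⟨u, hu⟩ := Set.nonempty_iff_ne_empty.mpr hx
      obtain ⟨s, hs, hsu⟩ := ih u (Relation.TransGen.single hu)
      exact ⟨s, hs, hsu.tail hu⟩

end Aux

/-- For a DAG `D` on a finite vertex set, the set of source
nodes is a maximum independent set of the unconditional dependence graph
`U^D`: no two source nodes are adjacent in `U^D`, and every independent set of
`U^D` has cardinality at most the number of source nodes. -/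
theorem sources_maximum_independent_set [Fintype V] (D : Digraph V)
    (hD : IsDAG D) :
    (∀ m ∈ sources D, ∀ m' ∈ sources D, m ≠ m' → ¬ UAdj D m m') ∧
    (∀ I : Set V, (∀ a ∈ I, ∀ b ∈ I, a ≠ b → ¬ UAdj D a b) →
      I.ncard ≤ (sources D).ncard) := by
  constructor
  · rintro m hm m' hm' hne ⟨_, h | h⟩
    · exact no_trek_sources hm hm' hne h
    · exact no_trek_sources hm' hm hne.symm h
  · intro I hI
    choose f hf1 hf2 using fun v => exists_source_anc hD v
    refine Set.ncard_le_ncard_of_injOn f (fun a _ => hf1 a) ?_ (Set.toFinite _)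
    intro a ha b hb hab
    by_contra hne
    refine hI a ha b hb hne ⟨hne, Or.inl ?_⟩
    exact hasTrek_of_common_anc hD hne (hf2 a) (by rw [hab]; exact hf2 b)

end UEC
end

section
/- Let D be a DAG on a finite vertex set V containing the edge v → w, and let D' be the directed graph identical to D except that v → w is replaced by w → v. Then D' is a DAG that is unconditionally equivalent to D if and only if the edge v → w is weakly covered in D. -/
namespace UEC

variable {V : Type*}

open Relation List

lemma chain_mem_rtg {R : V → V → Prop} {a b : V} {l : List V} (hc : List.Chain R a l) (hb : b ∈ a :: l) :
    ReflTransGen R a b := by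
  induction l generalizing a with
  | nil => simp at hb; subst hb; exact ReflTransGen.refl
  | cons c t ih =>
    rcases List.mem_cons.1 hb with rfl | hb
    · exact ReflTransGen.refl
    · rcases List.chain_cons.1 hc with ⟨hac, hct⟩
      exact ReflTransGen.head hac (ih hct hb)

lemma chain_nodup_s8 {R : V → V → Prop} (hD : ∀ x, ¬ TransGen R x x) {a : V} {l : List V}
    (hc : List.Chain R a l) : (a :: l).Nodup := by
  induction l generalizing a with
  | nil => simp
  | cons c t ih =>
    rcases List.chain_cons.1 hc with ⟨hac, hct⟩
    have hn := ih hct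
    refine List.nodup_cons.2 ⟨?_, hn⟩
    intro ha
    exact hD a (TransGen.head' hac (chain_mem_rtg hct ha))

lemma chain_suffix_s8 {R : V → V → Prop} {a b : V} {l : List V} (hc : List.Chain R a l) (hb : b ∈ a :: l) :
    ∃ m, List.Chain R b m ∧ (b :: m).getLast? = (a :: l).getLast? ∧ (b :: m) <:+ (a :: l) := by
  induction l generalizing a with
  | nil => simp at hb; subst hb; exact ⟨[], List.Chain.nil, rfl, List.suffix_refl _⟩
  | cons c t ih =>
    rcases List.mem_cons.1 hb with rfl | hb
    · exact ⟨c :: t, hc, rfl, List.suffix_refl _⟩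
    · rcases List.chain_cons.1 hc with ⟨hac, hct⟩
      obtain ⟨m, h1, h2, h3⟩ := ih hct hb
      exact ⟨m, h1, by rw [h2]; simp, h3.trans (List.suffix_cons _ _)⟩

lemma chain_getElem {R : V → V → Prop} {a : V} {l : List V} (hc : List.Chain R a l) :
    ∀ i, (h : i + 1 < (a :: l).length) → R ((a :: l)[i]'(by omega)) ((a :: l)[i+1]'h) := by
  induction l generalizing a with
  | nil => intro i h; simp at h
  | cons c t ih =>
    rcases List.chain_cons.1 hc with ⟨hac, hct⟩
    intro i h
    match i with
    | 0 => simpa using hac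
    | j + 1 =>
      have := ih hct j (by simpa using h)
      simpa using this

lemma isTrekList_of_edges {D : Digraph V} (hD : IsDAG D) {q : List V} (hnd : q.Nodup) (m : ℕ)
    (hedge : ∀ i, (h : i + 1 < q.length) →
      (i < m → D.Adj (q[i+1]'h) (q[i]'(by omega))) ∧ (m ≤ i → D.Adj (q[i]'(by omega)) (q[i+1]'h))) :
    IsTrekList D q := by
  refine ⟨hnd, ?_, ?_⟩
  · intro i h
    rcases lt_or_ge i m with hi | hi
    · exact Or.inr (by simpa using (hedge i h).1 hi)
    · exact Or.inl (by simpa using (hedge i h).2 hi)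
  · intro i h hcol
    simp only [List.get_eq_getElem] at hcol
    rcases lt_or_ge i m with hi | hi
    · have hb := (hedge i (by omega)).1 hi
      exact hD _ (TransGen.head hcol.1 (TransGen.single hb))
    · have hf := (hedge (i+1) h).2 (by omega)
      exact hD _ (TransGen.head hf (TransGen.single hcol.2))


lemma getElem_idx {l : List V} {i j : ℕ} (hij : i = j) {hi : i < l.length} :
    l[i]'hi = l[j]'(hij ▸ hi) := by subst hij; rfl


lemma hasTrek_aux {D : Digraph V} (hD : IsDAG D) (x y : V) :
    ∀ n : ℕ, ∀ u : V, ∀ lx ly : List V,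
      List.Chain D.Adj u lx → List.Chain D.Adj u ly →
      (u :: lx).getLast? = some x → (u :: ly).getLast? = some y →
      lx.length + ly.length = n → HasTrek D x y := by
  intro n
  induction n using Nat.strong_induction_on with
  | _ n IH =>
    intro u lx ly hcx hcy hlx hly hn
    by_cases hdis : ∀ z ∈ ly, z ∉ (u :: lx)
    · -- construct the trek
      refine ⟨(u :: lx).reverse ++ ly, ?_, ?_, ?_⟩
      · have hndx := chain_nodup_s8 hD hcx
        have hndy := chain_nodup_s8 hD hcy
        have hlenq : ((u :: lx).reverse ++ ly).length = lx.length + 1 + ly.length := by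
          simp only [List.length_append, List.length_reverse, List.length_cons]
        refine isTrekList_of_edges hD ?_ lx.length ?_
        · refine List.Nodup.append (List.nodup_reverse.2 hndx) (List.nodup_cons.1 hndy).2 ?_
          intro z hz hz'
          exact hdis z hz' (List.mem_reverse.1 hz)
        · -- edge structure
          have hback : ∀ i, i ≤ lx.length → ∀ (h : i < ((u :: lx).reverse ++ ly).length),
              ((u :: lx).reverse ++ ly)[i] = (u :: lx)[lx.length - i]'(Nat.lt_succ_of_le (Nat.sub_le _ _)) := by
            intro i hi h
            rw [List.getElem_append_left (by
              simp only [List.length_reverse, List.length_cons]; omega), List.getElem_reverse]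
            exact getElem_idx (by simp only [List.length_cons]; try omega)
          have hfwd : ∀ i, lx.length ≤ i →
              ((u :: lx).reverse ++ ly)[i]? = (u :: ly)[i - lx.length]? := by
            intro i hi
            rcases lt_or_ge i ((u :: lx).reverse ++ ly).length with h | h
            · rw [List.getElem?_eq_getElem h, List.getElem?_eq_getElem (by
                rw [hlenq] at h; simp only [List.length_cons]; omega)]
              congr 1
              rcases eq_or_lt_of_le hi with rfl | hi'
              · rw [hback lx.length le_rfl h]
                simp
              · rw [List.getElem_append_right (by
                  simp only [List.length_reverse, List.length_cons]; omega)]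
                rw [getElem_idx (l := u :: ly)
                  (show i - lx.length = (i - (lx.length + 1)) + 1 by omega),
                  List.getElem_cons_succ]
                exact getElem_idx (by simp only [List.length_reverse, List.length_cons]; try omega)
            · rw [List.getElem?_eq_none h, List.getElem?_eq_none (by
                rw [hlenq] at h; simp only [List.length_cons]; omega)]
          intro i h
          have h' := h
          rw [hlenq] at h'
          constructor
          · intro hi
            rw [hback i (by omega) (by omega), hback (i+1) (by omega) (by omega)]
            have hstep := chain_getElem hcx (lx.length - (i+1)) (by
              simp only [List.length_cons]; omega)
            rw [getElem_idx (l := u :: lx)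
              (show lx.length - (i+1) + 1 = lx.length - i by omega)] at hstep
            exact hstep
          · intro hi
            have e1 := hfwd i hi
            have e2 := hfwd (i+1) (by omega)
            rw [List.getElem?_eq_getElem (show i < ((u :: lx).reverse ++ ly).length by omega),
              List.getElem?_eq_getElem (show i - lx.length < (u :: ly).length by
                simp only [List.length_cons]; omega), Option.some_inj] at e1
            rw [List.getElem?_eq_getElem (show i + 1 < ((u :: lx).reverse ++ ly).length by omega),
              List.getElem?_eq_getElem (show i + 1 - lx.length < (u :: ly).length by
                simp only [List.length_cons]; omega), Option.some_inj] at e2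
            rw [e1, e2]
            have hstep := chain_getElem hcy (i - lx.length) (by
              simp only [List.length_cons]; omega)
            rw [getElem_idx (l := u :: ly)
              (show i - lx.length + 1 = i + 1 - lx.length by omega)] at hstep
            exact hstep
      · rw [List.head?_append, List.head?_reverse, hlx]
        rfl
      · cases ly with
        | nil =>
          rw [List.append_nil, List.getLast?_reverse]
          simp only [List.getLast?_singleton] at hly
          simpa using hly
        | cons c t =>
          rw [List.getLast?_append_of_ne_nil _ (by simp), ← List.getLast?_cons_cons (a := u)]
          exact hly
    · push_neg at hdis
      obtain ⟨z, hzly, hzlx⟩ := hdis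
      have hu_ly : u ∉ ly := (List.nodup_cons.1 (chain_nodup_s8 hD hcy)).1
      have hzu : z ≠ u := fun h => hu_ly (h ▸ hzly)
      obtain ⟨sx, hcsx, hlsx, hsufx⟩ := chain_suffix_s8 hcx hzlx
      obtain ⟨sy, hcsy, hlsy, hsufy⟩ := chain_suffix_s8 hcy (List.mem_cons_of_mem u hzly)
      have hx1 : sx.length < lx.length := by
        have hle := hsufx.length_le
        simp only [List.length_cons] at hle
        rcases lt_or_eq_of_le hle with h | h
        · omega
        · exfalso
          have := hsufx.eq_of_length (by simp only [List.length_cons]; omega)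
          exact hzu (by injection this)
      have hy1 : sy.length ≤ ly.length := by
        have hle := hsufy.length_le
        simp only [List.length_cons] at hle
        omega
      exact IH (sx.length + sy.length) (by omega) z sx sy hcsx hcsy
        (hlsx.trans hlx) (hlsy.trans hly) rfl

lemma rtg_of_steps {R : V → V → Prop} (f : ℕ → V) :
    ∀ a b : ℕ, a ≤ b → (∀ i, a ≤ i → i < b → R (f i) (f (i+1))) → ReflTransGen R (f a) (f b) := by
  intro a b hab
  induction b, hab using Nat.le_induction with
  | base => intro _; exact ReflTransGen.refl
  | succ b hab ih =>
    intro hstep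
    exact ReflTransGen.tail (ih fun i h1 h2 => hstep i h1 (by omega))
      (hstep b hab (by omega))

lemma hasTrek_iff {D : Digraph V} (hD : IsDAG D) (x y : V) :
    HasTrek D x y ↔ ∃ u, ReflTransGen D.Adj u x ∧ ReflTransGen D.Adj u y := by
  constructor
  · rintro ⟨p, ⟨hnd, hadj, hcol⟩, hhead, hlast⟩
    classical
    have hne : p ≠ [] := by rintro rfl; simp at hhead
    have hn : 0 < p.length := List.length_pos_iff.2 hne
    set F : ℕ → V := fun i => p.getD i x with hF
    have hgetD : ∀ i, (h : i < p.length) → F i = p[i]'h := fun i h => List.getD_eq_getElem p x h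
    have hx : F 0 = x := by
      rw [hgetD 0 hn]
      rw [List.head?_eq_getElem?, List.getElem?_eq_getElem hn, Option.some_inj] at hhead
      exact hhead
    have hy : F (p.length - 1) = y := by
      rw [hgetD _ (by omega)]
      rw [List.getLast?_eq_getElem?, List.getElem?_eq_getElem (by omega), Option.some_inj] at hlast
      exact hlast
    simp only [List.get_eq_getElem] at hadj hcol
    have hadj' : ∀ i, i + 1 < p.length → D.Adj (F i) (F (i+1)) ∨ D.Adj (F (i+1)) (F i) := by
      intro i h
      rw [hgetD i (by omega), hgetD (i+1) h]
      exact hadj i h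
    have hmono : ∀ i, i + 2 < p.length → D.Adj (F i) (F (i+1)) → D.Adj (F (i+1)) (F (i+2)) := by
      intro i h hf
      rcases hadj' (i+1) (by omega) with hc | hc
      · exact hc
      · exfalso
        refine hcol i h ⟨?_, ?_⟩
        · rw [← hgetD i (by omega), ← hgetD (i+1) (by omega)]; exact hf
        · rw [← hgetD (i+1) (by omega), ← hgetD (i+2) (by omega)]; exact hc
    by_cases hall : ∃ i, i + 1 < p.length ∧ ¬ D.Adj (F (i+1)) (F i)
    · set i0 := Nat.find hall with hi0
      obtain ⟨hi0lt, hi0f⟩ := Nat.find_spec hall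
      have hfwd0 : D.Adj (F i0) (F (i0+1)) := (hadj' i0 hi0lt).resolve_right hi0f
      have hback : ∀ i, i < i0 → i + 1 < p.length → D.Adj (F (i+1)) (F i) := by
        intro i hi h
        have := Nat.find_min hall hi
        push_neg at this
        exact this h
      have hfwd : ∀ i, i0 ≤ i → i + 1 < p.length → D.Adj (F i) (F (i+1)) := by
        intro i hi
        induction i, hi using Nat.le_induction with
        | base => intro _; exact hfwd0
        | succ i hi ih => intro h; exact hmono i h (ih (by omega))
      refine ⟨F i0, ?_, ?_⟩
      · rw [← hx]
        have := rtg_of_steps (R := Function.swap D.Adj) F 0 i0 (by omega)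
          (fun i h1 h2 => hback i h2 (by omega))
        exact Relation.reflTransGen_swap.1 this
      · rw [← hy]
        exact rtg_of_steps F i0 (p.length - 1) (by omega)
          (fun i h1 h2 => hfwd i h1 (by omega))
    · push_neg at hall
      refine ⟨F (p.length - 1), ?_, ReflTransGen.refl.trans (by rw [hy])⟩
      rw [← hx]
      have := rtg_of_steps (R := Function.swap D.Adj) F 0 (p.length - 1) (by omega)
        (fun i h1 h2 => hall i (by omega))
      exact Relation.reflTransGen_swap.1 this
  · rintro ⟨u, hux, huy⟩
    obtain ⟨lx, hcx, hgx⟩ := List.exists_isChain_cons_of_relationReflTransGen hux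
    obtain ⟨ly, hcy, hgy⟩ := List.exists_isChain_cons_of_relationReflTransGen huy
    refine hasTrek_aux hD x y (lx.length + ly.length) u lx ly hcx hcy ?_ ?_ rfl
    · rw [List.getLast?_eq_getLast (List.cons_ne_nil _ _), hgx]
    · rw [List.getLast?_eq_getLast (List.cons_ne_nil _ _), hgy]

section Aux

variable {D : Digraph V} {v w : V}

lemma rtg_mono_del : ∀ {a b : V}, ReflTransGen (delEdge D v w).Adj a b → ReflTransGen D.Adj a b :=
  fun h => Relation.ReflTransGen.mono (r := (delEdge D v w).Adj) (p := D.Adj) (fun _ _ h => h.1) _ _ h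

lemma ne_of_adj (hD : IsDAG D) (he : D.Adj v w) : v ≠ w := by
  rintro rfl
  exact hD v (TransGen.single he)

lemma w_not_source (he : D.Adj v w) : ¬ IsSource D w := by
  intro h
  have : v ∈ pa D w := he
  rw [h] at this
  exact this

lemma src_rtg {s u : V} (hs : IsSource D s) (h : ReflTransGen D.Adj u s) : u = s := by
  rcases Relation.ReflTransGen.cases_tail h with h' | ⟨c, _, hcs⟩
  · exact h'.symm
  · exact absurd (show c ∈ pa D s from hcs) (by rw [hs]; exact not_false_iff.mpr trivial)

lemma exists_source_ancestor [Finite V] (hD : IsDAG D) (x : V) :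
    ∃ s, IsSource D s ∧ ReflTransGen D.Adj s x := by
  have : IsTrans V (TransGen D.Adj) := ⟨fun _ _ _ => TransGen.trans⟩
  have : IsIrrefl V (TransGen D.Adj) := ⟨hD⟩
  have hwf : WellFounded D.Adj :=
    Subrelation.wf (fun h => TransGen.single h) (Finite.wellFounded_of_trans_of_irrefl (TransGen D.Adj))
  induction x using hwf.induction with
  | _ x IH =>
    by_cases hx : ∃ p, D.Adj p x
    · obtain ⟨p, hp⟩ := hx
      obtain ⟨s, hs1, hs2⟩ := IH p hp
      exact ⟨s, hs1, hs2.tail hp⟩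
    · push_neg at hx
      refine ⟨x, ?_, ReflTransGen.refl⟩
      rw [IsSource, Set.eq_empty_iff_forall_notMem]
      exact fun p hp => hx p hp

lemma an_singleton_iff (hD : IsDAG D) (u : V) : an D u = {u} ↔ IsSource D u := by
  constructor
  · intro h
    rw [IsSource, Set.eq_empty_iff_forall_notMem]
    intro p hp
    have : p ∈ an D u := ReflTransGen.single hp
    rw [h] at this
    exact hD u (TransGen.single (by rwa [this] at hp))
  · intro h
    ext t
    simp only [Set.mem_singleton_iff]
    constructor
    · intro ht
      exact (src_rtg h ht)
    · rintro rfl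
      exact ReflTransGen.refl

lemma mem_anSet_iff {A : Set V} {s : V} :
    s ∈ anSet D A ↔ ∃ a ∈ A, ReflTransGen D.Adj s a := by
  simp [anSet, an]

lemma mem_maSet_iff (hD : IsDAG D) {A : Set V} {s : V} :
    s ∈ maSet D A ↔ IsSource D s ∧ ∃ a ∈ A, ReflTransGen D.Adj s a := by
  rw [maSet, Set.mem_setOf_eq, mem_anSet_iff, an_singleton_iff hD, and_comm]

lemma rtg_del_or (hD : IsDAG D) (he : D.Adj v w) {a b : V} (h : ReflTransGen D.Adj a b) :
    ReflTransGen (delEdge D v w).Adj a b ∨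
      (ReflTransGen (delEdge D v w).Adj a v ∧ ReflTransGen (delEdge D v w).Adj w b) := by
  induction h with
  | refl => exact Or.inl ReflTransGen.refl
  | tail h1 h2 ih =>
    rename_i b' c
    by_cases hbc : b' = v ∧ c = w
    · obtain ⟨rfl, rfl⟩ := hbc
      rcases ih with h | ⟨hav, hwv⟩
      · exact Or.inr ⟨h, ReflTransGen.refl⟩
      · exact absurd (Relation.TransGen.tail' (rtg_mono_del hwv) he) (hD _)
    · have hS : (delEdge D v w).Adj b' c := ⟨h2, hbc⟩
      rcases ih with h | ⟨hav, hwb⟩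
      · exact Or.inl (h.tail hS)
      · exact Or.inr ⟨hav, hwb.tail hS⟩

lemma rtg_rev_or (hvw : ¬ ReflTransGen (delEdge D v w).Adj v w) {a b : V}
    (h : ReflTransGen (revEdge D v w).Adj a b) :
    ReflTransGen (delEdge D v w).Adj a b ∨
      (ReflTransGen (delEdge D v w).Adj a w ∧ ReflTransGen (delEdge D v w).Adj v b) := by
  induction h with
  | refl => exact Or.inl ReflTransGen.refl
  | tail h1 h2 ih =>
    rename_i b' c
    rcases h2 with hS | ⟨rfl, rfl⟩
    · rcases ih with h | ⟨haw, hvb⟩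
      · exact Or.inl (h.tail hS)
      · exact Or.inr ⟨haw, hvb.tail hS⟩
    · rcases ih with h | ⟨haw, hvb⟩
      · exact Or.inr ⟨h, ReflTransGen.refl⟩
      · exact absurd hvb hvw

lemma rtg_del_of_r' : ∀ {a b : V}, ReflTransGen (delEdge D v w).Adj a b →
    ReflTransGen (revEdge D v w).Adj a b :=
  fun h => Relation.ReflTransGen.mono (r := (delEdge D v w).Adj) (p := (revEdge D v w).Adj) (fun _ _ h => Or.inl h) _ _ h

lemma dec_R (hD : IsDAG D) (he : D.Adj v w) {a b : V} :
    ReflTransGen D.Adj a b ↔ ReflTransGen (delEdge D v w).Adj a b ∨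
      (ReflTransGen (delEdge D v w).Adj a v ∧ ReflTransGen (delEdge D v w).Adj w b) := by
  constructor
  · exact rtg_del_or hD he
  · rintro (h | ⟨hav, hwb⟩)
    · exact rtg_mono_del h
    · exact ((rtg_mono_del hav).tail he).trans (rtg_mono_del hwb)

lemma dec_R' (hvw : ¬ ReflTransGen (delEdge D v w).Adj v w) {a b : V} :
    ReflTransGen (revEdge D v w).Adj a b ↔ ReflTransGen (delEdge D v w).Adj a b ∨
      (ReflTransGen (delEdge D v w).Adj a w ∧ ReflTransGen (delEdge D v w).Adj v b) := by
  constructor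
  · exact rtg_rev_or hvw
  · rintro (h | ⟨haw, hvb⟩)
    · exact rtg_del_of_r' h
    · exact ((rtg_del_of_r' haw).tail (Or.inr ⟨rfl, rfl⟩)).trans (rtg_del_of_r' hvb)

lemma isDAG_rev_iff (hD : IsDAG D) (he : D.Adj v w) :
    IsDAG (revEdge D v w) ↔ ¬ ReflTransGen (delEdge D v w).Adj v w := by
  constructor
  · intro hDAG' hvw
    exact hDAG' v (Relation.TransGen.tail' (rtg_del_of_r' hvw) (Or.inr ⟨rfl, rfl⟩))
  · intro hvw x hcyc
    obtain ⟨c, hxc, hcx⟩ := (Relation.TransGen.tail'_iff).1 hcyc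
    rcases hcx with hS | ⟨rfl, rfl⟩
    · rcases rtg_rev_or hvw hxc with h | ⟨hxw, hvc⟩
      · exact hD x (Relation.TransGen.tail' (rtg_mono_del h) hS.1)
      · exact hvw ((hvc.tail hS).trans hxw)
    · rcases rtg_rev_or hvw hxc with h | ⟨_, hvw'⟩
      · exact hvw h
      · exact hvw hvw'

lemma mem_anSet_paw (hD : IsDAG D) (he : D.Adj v w) (s : V) :
    s ∈ anSet D (pa D w \ {v}) ↔ ReflTransGen (delEdge D v w).Adj s w ∧ s ≠ w := by
  rw [mem_anSet_iff]
  constructor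
  · rintro ⟨a, ⟨haw, hav⟩, hsa⟩
    have hav' : a ≠ v := hav
    have hSaw : (delEdge D v w).Adj a w := ⟨haw, fun h => hav' h.1⟩
    rcases rtg_del_or hD he hsa with h | ⟨_, hwa⟩
    · refine ⟨h.tail hSaw, ?_⟩
      rintro rfl
      exact hD _ (Relation.TransGen.tail' hsa haw)
    · exact absurd (Relation.TransGen.tail' (rtg_mono_del hwa) haw) (hD w)
  · rintro ⟨hsw, hne⟩
    rcases Relation.ReflTransGen.cases_tail hsw with h | ⟨c, hsc, hcw⟩
    · exact absurd h.symm hne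
    · exact ⟨c, ⟨hcw.1, fun h => hcw.2 ⟨h, rfl⟩⟩, rtg_mono_del hsc⟩

lemma mem_maSet_paw (hD : IsDAG D) (he : D.Adj v w) (s : V) :
    s ∈ maSet D (pa D w \ {v}) ↔
      IsSource D s ∧ ReflTransGen (delEdge D v w).Adj s w ∧ s ≠ w := by
  rw [maSet, Set.mem_setOf_eq, an_singleton_iff hD, mem_anSet_paw hD he, and_comm]

lemma mem_maSet_pav (hD : IsDAG D) (he : D.Adj v w) (s : V) :
    s ∈ maSet D (pa D v) ↔
      IsSource D s ∧ ReflTransGen (delEdge D v w).Adj s v ∧ s ≠ v := by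
  rw [mem_maSet_iff hD]
  constructor
  · rintro ⟨hsrc, a, hav, hsa⟩
    refine ⟨hsrc, ?_, ?_⟩
    · rcases rtg_del_or hD he (hsa.tail hav) with h | ⟨_, hwv⟩
      · exact h
      · exact absurd (Relation.TransGen.tail' (rtg_mono_del hwv) he) (hD w)
    · rintro rfl
      exact hD _ (Relation.TransGen.tail' hsa hav)
  · rintro ⟨hsrc, hsv, hne⟩
    rcases Relation.ReflTransGen.cases_tail hsv with h | ⟨c, hsc, hcv⟩
    · exact absurd h.symm hne
    · exact ⟨hsrc, c, hcv.1, rtg_mono_del hsc⟩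

lemma source_rev (he : D.Adj v w) {s : V} (hs : IsSource D s) (hsv : s ≠ v) :
    IsSource (revEdge D v w) s := by
  rw [IsSource, Set.eq_empty_iff_forall_notMem]
  rintro p (hp | ⟨rfl, rfl⟩)
  · exact absurd (show p ∈ pa D s from hp.1) (by rw [hs]; exact not_false_iff.mpr trivial)
  · exact hsv rfl

end Aux

/-- Let `D` be a DAG containing the edge `v → w` and let `D'`
be `D` with this edge replaced by `w → v`.  Then `D'` is a DAG unconditionally
equivalent to `D` iff `v → w` is weakly covered in `D`. -/
theorem revEdge_uncondEquiv_iff [Fintype V] (D : Digraph V) (hD : IsDAG D)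
    (v w : V) (he : D.Adj v w) :
    (IsDAG (revEdge D v w) ∧ UncondEquiv D (revEdge D v w)) ↔
      WeaklyCovered D v w := by
  have hne : v ≠ w := ne_of_adj hD he
  constructor
  · rintro ⟨hDAG', hequiv⟩
    have hvw : ¬ ReflTransGen (delEdge D v w).Adj v w := (isDAG_rev_iff hD he).1 hDAG'
    constructor
    · -- maSet equality
      ext s
      rw [mem_maSet_pav hD he, mem_maSet_paw hD he]
      constructor
      · rintro ⟨hsrc, hsv, hsvne⟩
        refine ⟨hsrc, ?_, fun h => w_not_source he (h ▸ hsrc)⟩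
        have hsw : s ≠ w := fun h => w_not_source he (h ▸ hsrc)
        have hT : HasTrek D s w :=
          (hasTrek_iff hD s w).2 ⟨s, ReflTransGen.refl, (rtg_mono_del hsv).tail he⟩
        have hT' := (hequiv s w hsw).1 hT
        obtain ⟨u, hus, huw⟩ := (hasTrek_iff hDAG' s w).1 hT'
        have hu : u = s := src_rtg (source_rev he hsrc hsvne) hus
        subst hu
        rcases rtg_rev_or hvw huw with h | ⟨_, hvw'⟩
        · exact h
        · exact absurd hvw' hvw
      · rintro ⟨hsrc, hsw, hswne⟩
        have hsvne : s ≠ v := by rintro rfl; exact hvw hsw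
        refine ⟨hsrc, ?_, hsvne⟩
        have hT' : HasTrek (revEdge D v w) s v :=
          (hasTrek_iff hDAG' s v).2
            ⟨s, ReflTransGen.refl, (rtg_del_of_r' hsw).tail (Or.inr ⟨rfl, rfl⟩)⟩
        have hT := (hequiv s v hsvne).2 hT'
        obtain ⟨u, hus, huv⟩ := (hasTrek_iff hD s v).1 hT
        have hu : u = s := src_rtg hsrc hus
        subst hu
        rcases rtg_del_or hD he huv with h | ⟨_, hwv⟩
        · exact h
        · exact absurd (Relation.TransGen.tail' (rtg_mono_del hwv) he) (hD w)
    · -- v not in anSet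
      rw [mem_anSet_paw hD he]
      rintro ⟨h, _⟩
      exact hvw h
  · rintro ⟨hma, han⟩
    rw [mem_anSet_paw hD he] at han
    have hvw : ¬ ReflTransGen (delEdge D v w).Adj v w := fun h => han ⟨h, hne⟩
    have hDAG' : IsDAG (revEdge D v w) := (isDAG_rev_iff hD he).2 hvw
    have hi : ∀ s, IsSource D s →
        ((ReflTransGen (delEdge D v w).Adj s v ∧ s ≠ v) ↔
          (ReflTransGen (delEdge D v w).Adj s w ∧ s ≠ w)) := by
      intro s hsrc
      have := Set.ext_iff.1 hma s
      rw [mem_maSet_pav hD he, mem_maSet_paw hD he] at this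
      constructor
      · intro h
        exact (this.1 ⟨hsrc, h⟩).2
      · intro h
        exact (this.2 ⟨hsrc, h⟩).2
    refine ⟨hDAG', ?_⟩
    intro x y hxy
    rw [hasTrek_iff hD, hasTrek_iff hDAG']
    -- helper: case of mixed decomposition, D → D'
    have key1 : ∀ x y u : V, ReflTransGen (delEdge D v w).Adj u x →
        ReflTransGen (delEdge D v w).Adj u v → ReflTransGen (delEdge D v w).Adj w y →
        ∃ z, ReflTransGen (revEdge D v w).Adj z x ∧ ReflTransGen (revEdge D v w).Adj z y := by
      intro x y u hux huv hwy
      obtain ⟨s, hsrc, hsu⟩ := exists_source_ancestor hD u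
      rcases rtg_del_or hD he hsu with hsu' | ⟨_, hwu⟩
      · rcases eq_or_ne s v with rfl | hsv
        · exact ⟨w, (rtg_del_of_r' (hsu'.trans hux)).head (Or.inr ⟨rfl, rfl⟩),
            rtg_del_of_r' hwy⟩
        · have hsw : ReflTransGen (delEdge D v w).Adj s w :=
            ((hi s hsrc).1 ⟨hsu'.trans huv, hsv⟩).1
          exact ⟨s, rtg_del_of_r' (hsu'.trans hux), rtg_del_of_r' (hsw.trans hwy)⟩
      · exact absurd (Relation.TransGen.tail'
          (rtg_mono_del (hwu.trans huv)) he) (hD w)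
    have key2 : ∀ x y u : V, ReflTransGen (delEdge D v w).Adj u x →
        ReflTransGen (delEdge D v w).Adj u w → ReflTransGen (delEdge D v w).Adj v y →
        ∃ z, ReflTransGen D.Adj z x ∧ ReflTransGen D.Adj z y := by
      intro x y u hux huw hvy
      obtain ⟨s, hsrc, hsu⟩ := exists_source_ancestor hD u
      rcases rtg_del_or hD he hsu with hsu' | ⟨hsv, hwu⟩
      · have hswne : s ≠ w := fun h => w_not_source he (h ▸ hsrc)
        have hsv : ReflTransGen (delEdge D v w).Adj s v :=
          ((hi s hsrc).2 ⟨hsu'.trans huw, hswne⟩).1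
        exact ⟨s, rtg_mono_del (hsu'.trans hux),
          (rtg_mono_del hsv).trans (rtg_mono_del hvy)⟩
      · exact ⟨v, (rtg_mono_del (hwu.trans hux)).head he, rtg_mono_del hvy⟩
    constructor
    · rintro ⟨u, hux, huy⟩
      rcases rtg_del_or hD he hux with hx | ⟨huv, hwx⟩ <;>
        rcases rtg_del_or hD he huy with hy | ⟨huv', hwy⟩
      · exact ⟨u, rtg_del_of_r' hx, rtg_del_of_r' hy⟩
      · exact key1 x y u hx huv' hwy
      · obtain ⟨z, h1, h2⟩ := key1 y x u hy huv hwx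
        exact ⟨z, h2, h1⟩
      · exact ⟨w, rtg_del_of_r' hwx, rtg_del_of_r' hwy⟩
    · rintro ⟨u, hux, huy⟩
      rcases rtg_rev_or hvw hux with hx | ⟨huw, hvx⟩ <;>
        rcases rtg_rev_or hvw huy with hy | ⟨huw', hvy⟩
      · exact ⟨u, rtg_mono_del hx, rtg_mono_del hy⟩
      · exact key2 x y u hx huw' hvy
      · obtain ⟨z, h1, h2⟩ := key2 y x u hy huw hvx
        exact ⟨z, h2, h1⟩
      · exact ⟨v, rtg_mono_del hvx, rtg_mono_del hvy⟩

end UEC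
end

section
/- Let D be a DAG on a finite vertex set V, let v, w be distinct nonadjacent nodes such that (v, w) is partially weakly covered or implied by transitivity in D, and let D̄ be the DAG obtained from D by adding the edge v → w. Then for every node u, ma_{D̄}({u}) = ma_D({u}); in particular, D and D̄ have the same set of source nodes and every node has the same set of source-node ancestors in D and in D̄. -/
namespace UEC

variable {V : Type*}

lemma anSet_singleton (D : Digraph V) (u : V) : anSet D {u} = an D u := by
  simp [anSet]

lemma an_eq_singleton_iff (D : Digraph V) (hirr : ∀ x, ¬ D.Adj x x) (s : V) :
    an D s = {s} ↔ pa D s = ∅ := by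
  constructor
  · intro h
    ext p
    simp only [pa, Set.mem_setOf_eq, Set.mem_empty_iff_false, iff_false]
    intro hp
    have hps : p ∈ an D s := Relation.ReflTransGen.single hp
    rw [h, Set.mem_singleton_iff] at hps
    exact hirr s (hps ▸ hp)
  · intro h
    ext a
    simp only [an, Set.mem_setOf_eq, Set.mem_singleton_iff]
    constructor
    · intro ha
      rcases ha.cases_tail with h' | ⟨c, _, hc⟩
      · exact h'.symm
      · exfalso
        have hc' : c ∈ pa D s := hc
        rw [h] at hc'
        exact hc'
    · rintro rfl
      exact Relation.ReflTransGen.refl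

lemma reach_addEdge_iff (D : Digraph V) (v w a b : V) :
    Relation.ReflTransGen (addEdge D v w).Adj a b ↔
      Relation.ReflTransGen D.Adj a b ∨
        (Relation.ReflTransGen D.Adj a v ∧ Relation.ReflTransGen D.Adj w b) := by
  constructor
  · intro h
    induction h with
    | refl => exact Or.inl Relation.ReflTransGen.refl
    | @tail c b hac hcb ih =>
      rcases hcb with hD' | ⟨rfl, rfl⟩
      · rcases ih with h1 | ⟨h1, h2⟩
        · exact Or.inl (h1.tail hD')
        · exact Or.inr ⟨h1, h2.tail hD'⟩
      · rcases ih with h1 | ⟨h1, _⟩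
        · exact Or.inr ⟨h1, Relation.ReflTransGen.refl⟩
        · exact Or.inr ⟨h1, Relation.ReflTransGen.refl⟩
  · rintro (h | ⟨h1, h2⟩)
    · exact Relation.ReflTransGen.mono (fun x y hxy => Or.inl hxy) _ _ h
    · exact ((Relation.ReflTransGen.mono (fun x y hxy => Or.inl hxy) _ _ h1).tail (Or.inr ⟨rfl, rfl⟩)).trans
        (Relation.ReflTransGen.mono (fun x y hxy => Or.inl hxy) _ _ h2)

lemma exists_source_ancestor_s10 [Fintype V] (D : Digraph V) (hD : IsDAG D) (x : V) :
    ∃ s, pa D s = ∅ ∧ s ∈ an D x := by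
  have hwf : WellFounded (Relation.TransGen D.Adj) := by
    have : IsIrrefl V (Relation.TransGen D.Adj) := ⟨hD⟩
    exact Finite.wellFounded_of_trans_of_irrefl _
  induction x using hwf.induction with
  | _ x ih =>
    by_cases h : pa D x = ∅
    · exact ⟨x, h, Relation.ReflTransGen.refl⟩
    · obtain ⟨p, hp⟩ := Set.nonempty_iff_ne_empty.2 h
      obtain ⟨s, hs, hsp⟩ := ih p (Relation.TransGen.single hp)
      exact ⟨s, hs, hsp.tail hp⟩

/-- Let `(v, w)` be a nonadjacent pair that is partially
weakly covered or implied by transitivity in the DAG `D`, and let `D̄` be `D`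
with the edge `v → w` added.  Then every node has the same set of source-node
ancestors in `D̄` as in `D`; in particular `D` and `D̄` have the same source
nodes. -/
theorem maSet_stable_under_addEdge [Fintype V] (D : Digraph V) (hD : IsDAG D)
    (v w : V) (hvw : v ≠ w) (hnadj : ¬ Adjacent D v w)
    (hvwCov : PartiallyWeaklyCovered D v w ∨ ImpliedByTransitivity D v w) :
    (∀ u : V, maSet (addEdge D v w) {u} = maSet D {u}) ∧
    sources (addEdge D v w) = sources D := by
  have hirr : ∀ x, ¬ D.Adj x x := fun x h => hD x (Relation.TransGen.single h)
  have hirr' : ∀ x, ¬ (addEdge D v w).Adj x x := by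
    rintro x (h | ⟨rfl, rfl⟩)
    · exact hirr x h
    · exact hvw rfl
  -- `w` has a parent in `D`
  have hwpa : pa D w ≠ ∅ := by
    rcases hvwCov with ⟨hsub, hvnaw, hwnav, hpav⟩ | hibt
    · intro hpw
      obtain ⟨s, hs, hsv⟩ := exists_source_ancestor_s10 D hD v
      have hsmem : s ∈ maSet D {v} :=
        ⟨by rw [anSet_singleton]; exact hsv, (an_eq_singleton_iff D hirr s).2 hs⟩
      have hmw := hsub hsmem
      have h1 := hmw.1
      rw [anSet_singleton, (an_eq_singleton_iff D hirr w).2 hpw] at h1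
      exact hwnav (h1 ▸ hsv)
    · obtain ⟨hvaw, -⟩ := hibt
      rcases Relation.ReflTransGen.cases_tail hvaw with h' | ⟨c, _, hc⟩
      · exact absurd h'.symm hvw
      · exact Set.nonempty_iff_ne_empty.1 ⟨c, hc⟩
  -- key: any source-ancestor of `v` is an ancestor of `w`
  have hkey : ∀ s u : V, pa D s = ∅ → Relation.ReflTransGen D.Adj s v →
      Relation.ReflTransGen D.Adj w u → Relation.ReflTransGen D.Adj s u := by
    intro s u hs hsv hwu
    rcases hvwCov with ⟨hsub, -, -, -⟩ | ⟨hvaw, -⟩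
    · have hsmem : s ∈ maSet D {v} :=
        ⟨by rw [anSet_singleton]; exact hsv, (an_eq_singleton_iff D hirr s).2 hs⟩
      have h1 := (hsub hsmem).1
      rw [anSet_singleton] at h1
      exact Relation.ReflTransGen.trans h1 hwu
    · exact (hsv.trans hvaw).trans hwu
  have hpaIff : ∀ x : V, pa (addEdge D v w) x = ∅ ↔ pa D x = ∅ := by
    intro x
    constructor
    · intro h
      have hsub : pa D x ⊆ pa (addEdge D v w) x := fun p hp => Or.inl hp
      rw [h] at hsub
      exact Set.subset_empty_iff.1 hsub
    · intro h
      have hxw : x ≠ w := fun hxw => hwpa (hxw ▸ h)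
      ext p
      simp only [pa, addEdge, Set.mem_setOf_eq, Set.mem_empty_iff_false, iff_false]
      rintro (hp | ⟨rfl, rfl⟩)
      · have : p ∈ pa D x := hp
        rw [h] at this
        exact this
      · exact hxw rfl
  constructor
  · intro u
    ext s
    constructor
    · rintro ⟨h1, h2⟩
      have hps : pa D s = ∅ := (hpaIff s).1 ((an_eq_singleton_iff _ hirr' s).1 h2)
      rw [anSet_singleton] at h1
      have hreach : Relation.ReflTransGen D.Adj s u := by
        rcases (reach_addEdge_iff D v w s u).1 h1 with h | ⟨hsv, hwu⟩
        · exact h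
        · exact hkey s u hps hsv hwu
      exact ⟨by rw [anSet_singleton]; exact hreach,
        (an_eq_singleton_iff D hirr s).2 hps⟩
    · rintro ⟨h1, h2⟩
      have hps : pa D s = ∅ := (an_eq_singleton_iff D hirr s).1 h2
      rw [anSet_singleton] at h1
      refine ⟨by rw [anSet_singleton]; exact Relation.ReflTransGen.mono (fun x y hxy => Or.inl hxy) _ _ h1, ?_⟩
      exact (an_eq_singleton_iff _ hirr' s).2 ((hpaIff s).2 hps)
  · ext x
    simp only [sources, IsSource, Set.mem_setOf_eq]
    exact hpaIff x

end UEC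
end
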